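/- Let A ∈ 𝒮ⁿ[k] be a Robinson matrix and let d ∈ 𝔻ᵏ satisfy the path condition for A. Then the map Π : [n] → ℝ defined recursively by Π(1) = 0 and Π(v) = (ub_v + lb_v)/2 for 2 ≤ v ≤ n is strictly increasing. -/

import Mathlib

/-- The standard unit vector `χ_t ∈ ℤᵏ` (as a function `ℕ → ℤ`, supported on index `t`). -/
def chi (t : ℕ) : ℕ → ℤ := fun i => if i = t then 1 else 0

/-- The dot product `bᵀ d = Σ_{i=1}^k b_i d_i`. -/
def dotProd (k : ℕ) (b : ℕ → ℤ) (d : ℕ → ℝ) : ℝ :=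
  ∑ i ∈ Finset.Icc 1 k, (b i : ℝ) * d i

/-- `A ∈ 𝒮ⁿ[k]`: a symmetric matrix with entries in `{0,…,k}`, diagonal `k`,
entries increasing towards the diagonal. -/
def IsRobinson (n k : ℕ) (a : Fin n → Fin n → ℕ) : Prop :=
  (∀ u v, a u v = a v u) ∧ (∀ u, a u u = k) ∧ (∀ u v, a u v ≤ k) ∧
    ∀ u v w : Fin n, u < v → v < w → a u w ≤ a u v ∧ a u w ≤ a v w

/-- `d ∈ 𝔻ᵏ`: threshold vectors with `d 1 > d 2 > ⋯ > d k > 0`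
(values outside `{1,…,k}` are irrelevant). -/
def IsThreshold (k : ℕ) (d : ℕ → ℝ) : Prop :=
  (∀ i, 1 ≤ i → i < k → d (i + 1) < d i) ∧ 0 < d k

/-- Uniform embedding: for all pairs `u,v` and all `t ≤ k`,
`a u v = t ↔ d_{t+1} < |f v − f u| ≤ d_t`, with conventions `d_0 = +∞`, `d_{k+1} = −∞`. -/
def IsUnifEmb (n k : ℕ) (a : Fin n → Fin n → ℕ) (d : ℕ → ℝ)
    (f : Fin n → ℝ) : Prop :=
  ∀ u v : Fin n, ∀ t : ℕ, t ≤ k →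
    (a u v = t ↔ (t = k ∨ d (t + 1) < |f v - f u|) ∧ (t = 0 ∨ |f v - f u| ≤ d t))

/-- The strict inequality system: for all `u < v` and all `t ≤ k`,
`a u v = t ↔ d_{t+1} < f v − f u < d_t`, with conventions `d_0 = +∞`, `d_{k+1} = 0`. -/
def SatisfiesStrict (n k : ℕ) (a : Fin n → Fin n → ℕ) (d : ℕ → ℝ)
    (f : Fin n → ℝ) : Prop :=
  ∀ u v : Fin n, u < v → ∀ t : ℕ, t ≤ k →
    (a u v = t ↔ ((if t = k then (0 : ℝ) else d (t + 1)) < f v - f u) ∧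
      (t = 0 ∨ f v - f u < d t))

/-- `β⁺(x,y)`: for `x < y`, `β⁺(x,y) = χ_{a x y}` (junk value `χ_0` when `a x y = 0`,
where it is undefined); for `x > y`, `β⁺(x,y) = −β⁻(y,x)`. -/
def betaP {n : ℕ} (k : ℕ) (a : Fin n → Fin n → ℕ) (x y : Fin n) : ℕ → ℤ :=
  if x < y then chi (a x y)
  else if y < x then (if a x y = k then 0 else -chi (a x y + 1))
  else 0

/-- `β⁻(x,y)`: for `x < y`, `β⁻(x,y) = χ_{a x y + 1}` if `a x y < k` and `0` if `a x y = k`;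
for `x > y`, `β⁻(x,y) = −β⁺(y,x)`. -/
def betaM {n : ℕ} (k : ℕ) (a : Fin n → Fin n → ℕ) (x y : Fin n) : ℕ → ℤ :=
  if x < y then (if a x y = k then 0 else chi (a x y + 1))
  else if y < x then -chi (a x y)
  else 0

/-- `β⁺(W) = Σ_i β⁺(w_{i−1}, w_i)` over the steps of the walk `W`. -/
def betaPWalk {n : ℕ} (k : ℕ) (a : Fin n → Fin n → ℕ) (w : List (Fin n)) : ℕ → ℤ :=
  ((w.zip w.tail).map fun p => betaP k a p.1 p.2).sum

/-- `β⁻(W) = Σ_i β⁻(w_{i−1}, w_i)` over the steps of the walk `W`. -/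
def betaMWalk {n : ℕ} (k : ℕ) (a : Fin n → Fin n → ℕ) (w : List (Fin n)) : ℕ → ℤ :=
  ((w.zip w.tail).map fun p => betaM k a p.1 p.2).sum

/-- A `(u,v)`-upper-bound-walk: a walk from `u` to `v` with consecutive entries distinct,
in which every increasing step is an edge (`a x y ≥ 1`). -/
def IsUBWalk {n : ℕ} (a : Fin n → Fin n → ℕ) (u v : Fin n) (w : List (Fin n)) : Prop :=
  w.head? = some u ∧ w.getLast? = some v ∧
    List.Chain' (fun x y => x ≠ y ∧ (x < y → 1 ≤ a x y)) w

/-- A `(u,v)`-lower-bound-walk: a walk from `u` to `v` with consecutive entries distinct,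
in which every decreasing step is an edge (`a x y ≥ 1`). -/
def IsLBWalk {n : ℕ} (a : Fin n → Fin n → ℕ) (u v : Fin n) (w : List (Fin n)) : Prop :=
  w.head? = some u ∧ w.getLast? = some v ∧
    List.Chain' (fun x y => x ≠ y ∧ (y < x → 1 ≤ a x y)) w

/-- An upper-bound-cycle: a `(u,u)`-upper-bound-walk of length `p ≥ 2` in which
`u = w_0 = w_p` is the only repeated vertex. -/
def IsUBCycle {n : ℕ} (a : Fin n → Fin n → ℕ) (w : List (Fin n)) : Prop :=
  ∃ u : Fin n, IsUBWalk a u u w ∧ 3 ≤ w.length ∧ w.dropLast.Nodup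

/-- The path condition for `A` and `d`: for all `u < v`, every `(u,v)`-upper-bound-path `W₁`
and every `(u,v)`-lower-bound-path `W₂` satisfy `β⁻(W₂)ᵀ d < β⁺(W₁)ᵀ d`. -/
def PathCondition (n k : ℕ) (a : Fin n → Fin n → ℕ) (d : ℕ → ℝ) : Prop :=
  ∀ u v : Fin n, u < v → ∀ w₁ w₂ : List (Fin n),
    IsUBWalk a u v w₁ → w₁.Nodup → IsLBWalk a u v w₂ → w₂.Nodup →
      dotProd k (betaMWalk k a w₂) d < dotProd k (betaPWalk k a w₁) d

/-- The prefix-sum partial order `⪯` on `ℤᵏ`. -/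
def Preceq (k : ℕ) (x y : ℕ → ℤ) : Prop :=
  ∀ t, 1 ≤ t → t ≤ k → ∑ i ∈ Finset.Icc 1 t, x i ≤ ∑ i ∈ Finset.Icc 1 t, y i
section Helpers

variable {n k : ℕ} {a : Fin n → Fin n → ℕ} {d : ℕ → ℝ}

/-- generic walk sum -/
def wsum (g : Fin n → Fin n → (ℕ → ℤ)) (w : List (Fin n)) : ℕ → ℤ :=
  ((w.zip w.tail).map fun p => g p.1 p.2).sum

lemma betaMWalk_eq_wsum (w : List (Fin n)) : betaMWalk k a w = wsum (betaM k a) w := rfl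
lemma betaPWalk_eq_wsum (w : List (Fin n)) : betaPWalk k a w = wsum (betaP k a) w := rfl

lemma wsum_nil (g : Fin n → Fin n → (ℕ → ℤ)) : wsum g ([] : List (Fin n)) = 0 := rfl
lemma wsum_single (g : Fin n → Fin n → (ℕ → ℤ)) (x : Fin n) : wsum g [x] = 0 := rfl
lemma wsum_cons₂ (g : Fin n → Fin n → (ℕ → ℤ)) (x y : Fin n) (t : List (Fin n)) :
    wsum g (x :: y :: t) = g x y + wsum g (y :: t) := by
  simp [wsum]

lemma wsum_glue (g : Fin n → Fin n → (ℕ → ℤ)) (l : List (Fin n)) (m : Fin n) (r : List (Fin n)) :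
    wsum g (l ++ m :: r) = wsum g (l ++ [m]) + wsum g (m :: r) := by
  induction l with
  | nil => simp [wsum_single]
  | cons x l ih =>
    cases l with
    | nil => simp [wsum_cons₂, wsum_single]
    | cons x' l' =>
      simp only [List.cons_append, wsum_cons₂] at *
      rw [ih]; abel

lemma dotProd_add (x y : ℕ → ℤ) : dotProd k (x + y) d = dotProd k x d + dotProd k y d := by
  simp [dotProd, Finset.sum_add_distrib, add_mul]

lemma dotProd_zero : dotProd k (0 : ℕ → ℤ) d = 0 := by simp [dotProd]

lemma dotProd_neg (x : ℕ → ℤ) : dotProd k (-x) d = - dotProd k x d := by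
  simp [dotProd, neg_mul, Finset.sum_neg_distrib]

lemma dotProd_chi (s : ℕ) (h1 : 1 ≤ s) (h2 : s ≤ k) : dotProd k (chi s) d = d s := by
  unfold dotProd chi
  rw [Finset.sum_eq_single s]
  · simp
  · intro b _ hb; simp [hb]
  · intro h; exact absurd (Finset.mem_Icc.mpr ⟨h1, h2⟩) h

lemma d_pos (hd : IsThreshold k d) : ∀ s, 1 ≤ s → s ≤ k → 0 < d s := by
  have H : ∀ j s, 1 ≤ s → s ≤ k → k - s ≤ j → 0 < d s := by
    intro j
    induction j with
    | zero =>
      intro s h1 h2 h3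
      have : s = k := by omega
      subst this; exact hd.2
    | succ j ih =>
      intro s h1 h2 h3
      rcases eq_or_lt_of_le h2 with rfl | hlt
      · exact hd.2
      · exact (ih (s+1) (by omega) (by omega) (by omega)).trans (hd.1 s h1 hlt)
  exact fun s h1 h2 => H (k - s) s h1 h2 le_rfl

lemma betaM_swap (hsym : ∀ u v, a u v = a v u) (x y : Fin n) :
    betaM k a y x = - betaP k a x y := by
  unfold betaM betaP
  rcases lt_trichotomy x y with h | h | h
  · simp [h, not_lt.mpr h.le, hsym y x]
  · subst h; simp
  · simp only [h, not_lt.mpr h.le, if_true, if_false, hsym y x]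
    split <;> simp

lemma betaP_swap (hsym : ∀ u v, a u v = a v u) (x y : Fin n) :
    betaP k a y x = - betaM k a x y := by
  have := betaM_swap (k := k) hsym y x
  rw [this]; simp

lemma wsum_reverse (g₁ g₂ : Fin n → Fin n → (ℕ → ℤ))
    (h : ∀ x y, g₂ y x = - g₁ x y) :
    ∀ w : List (Fin n), wsum g₂ w.reverse = - wsum g₁ w := by
  intro w
  induction w with
  | nil => simp [wsum_nil]
  | cons x t ih =>
    cases t with
    | nil => simp [wsum_single, wsum_nil]
    | cons y t' =>
      have h2 : (x :: y :: t').reverse = t'.reverse ++ (y :: [x]) := by simp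
      rw [h2, wsum_glue]
      have h3 : t'.reverse ++ [y] = (y :: t').reverse := by simp
      rw [h3, ih, wsum_cons₂, wsum_single, wsum_cons₂, h x y]
      abel

end Helpers
section Helpers2

variable {n k : ℕ} {a : Fin n → Fin n → ℕ} {d : ℕ → ℝ}

lemma isLBWalk_reverse (hsym : ∀ u v, a u v = a v u) {u v : Fin n} {w : List (Fin n)}
    (h : IsUBWalk a u v w) : IsLBWalk a v u w.reverse := by
  obtain ⟨h1, h2, h3⟩ := h
  refine ⟨by rw [List.head?_reverse]; exact h2, by rw [List.getLast?_reverse]; exact h1, ?_⟩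
  unfold List.Chain' at *
  rw [List.isChain_reverse]
  exact h3.imp (fun x y hxy => ⟨fun he => hxy.1 he.symm, fun hlt => (hsym y x) ▸ hxy.2 hlt⟩)

lemma isUBWalk_reverse (hsym : ∀ u v, a u v = a v u) {u v : Fin n} {w : List (Fin n)}
    (h : IsLBWalk a u v w) : IsUBWalk a v u w.reverse := by
  obtain ⟨h1, h2, h3⟩ := h
  refine ⟨by rw [List.head?_reverse]; exact h2, by rw [List.getLast?_reverse]; exact h1, ?_⟩
  unfold List.Chain' at *
  rw [List.isChain_reverse]
  exact h3.imp (fun x y hxy => ⟨fun he => hxy.1 he.symm, fun hlt => (hsym y x) ▸ hxy.2 hlt⟩)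

lemma exists_dup_decomp {α : Type*} {l : List α} (h : ¬ l.Nodup) :
    ∃ (x : α) (l₁ l₂ l₃ : List α), l = l₁ ++ x :: (l₂ ++ x :: l₃) := by
  induction l with
  | nil => simp at h
  | cons y t ih =>
    by_cases hy : y ∈ t
    · obtain ⟨s, r, rfl⟩ := List.append_of_mem hy
      exact ⟨y, [], s, r, by simp⟩
    · have ht : ¬ t.Nodup := fun hn => h (List.nodup_cons.mpr ⟨hy, hn⟩)
      obtain ⟨x, l₁, l₂, l₃, rfl⟩ := ih ht
      exact ⟨x, y :: l₁, l₂, l₃, by simp⟩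

lemma getLast?_cons_of_ne_nil {α : Type*} {t : List α} (h : t ≠ []) (x : α) :
    (x :: t).getLast? = t.getLast? := by
  cases t with
  | nil => exact absurd rfl h
  | cons y s => exact List.getLast?_cons_cons

end Helpers2
section Helpers3

variable {n k : ℕ} {a : Fin n → Fin n → ℕ} {d : ℕ → ℝ}

lemma head?_append_cons {α : Type*} (l : List α) (x : α) (s t : List α) :
    (l ++ x :: s).head? = (l ++ x :: t).head? := by cases l <;> simp

lemma pathRed (hsym : ∀ u v, a u v = a v u) (hpc : PathCondition n k a d) :
    ∀ (N : ℕ) (w : List (Fin n)) (u v : Fin n), w.length ≤ N → IsLBWalk a u v w →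
      ∃ p : List (Fin n), IsLBWalk a u v p ∧ p.Nodup ∧
        dotProd k (betaMWalk k a w) d ≤ dotProd k (betaMWalk k a p) d := by
  intro N
  induction N with
  | zero =>
    intro w u v hlen hw
    have : w = [] := List.length_eq_zero_iff.mp (Nat.le_zero.mp hlen)
    subst this; exact absurd hw.1 (by simp)
  | succ N ih =>
    intro w u v hlen hw
    by_cases hnd : w.Nodup
    · exact ⟨w, hw, hnd, le_rfl⟩
    obtain ⟨x, l₁, l₂, l₃, rfl⟩ := exists_dup_decomp hnd
    obtain ⟨hhead, hlast, hchain⟩ := hw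
    rw [show l₁ ++ x :: (l₂ ++ x :: l₃) = l₁ ++ ((x :: l₂) ++ (x :: l₃)) by simp] at hchain
    unfold List.Chain' at hchain
    rw [List.isChain_append] at hchain
    obtain ⟨hc1, hc2, hJ1⟩ := hchain
    rw [List.isChain_append] at hc2
    obtain ⟨hc3, hc4, hJ2⟩ := hc2
    -- chain of the new walk
    have hchain' : List.Chain' (fun x y => x ≠ y ∧ (y < x → 1 ≤ a x y)) (l₁ ++ x :: l₃) := by
      unfold List.Chain'
      rw [List.isChain_append]
      refine ⟨hc1, hc4, fun p hp q hq => hJ1 p hp q (by simpa using hq)⟩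
    -- chain of the cycle
    have hCycle : List.Chain' (fun x y => x ≠ y ∧ (y < x → 1 ≤ a x y)) ((x :: l₂) ++ [x]) := by
      unfold List.Chain'
      rw [List.isChain_append]
      exact ⟨hc3, List.isChain_singleton x, fun p hp q hq => by
        obtain rfl : x = q := by simpa using hq
        exact hJ2 p hp x (by simp)⟩
    cases l₂ with
    | nil =>
      have h2 : List.Chain' (fun x y => x ≠ y ∧ (y < x → 1 ≤ a x y)) [x, x] := hCycle
      exact absurd rfl (List.isChain_pair.mp h2).1
    | cons y l₂' =>
      -- the tail of the cycle, an LB walk from y to x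
      have hCyc2 : List.Chain' (fun x y => x ≠ y ∧ (y < x → 1 ≤ a x y))
          (x :: y :: (l₂' ++ [x])) := hCycle
      unfold List.Chain' at hCyc2
      rw [List.isChain_cons_cons] at hCyc2
      obtain ⟨hRxy, hCT⟩ := hCyc2
      have hT : IsLBWalk a y x (y :: (l₂' ++ [x])) :=
        ⟨by simp, (List.getLast?_concat (l := y :: l₂') : ((y :: l₂') ++ [x]).getLast? = some x), hCT⟩
      have hTlen : (y :: (l₂' ++ [x])).length ≤ N := by
        simp only [List.length_append, List.length_cons, List.length_nil] at hlen ⊢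
        omega
      obtain ⟨P, hP, hPnd, hPle⟩ := ih _ y x hTlen hT
      -- the cycle has nonpositive value
      have hcyc : dotProd k (betaM k a x y) d + dotProd k (wsum (betaM k a) (y :: (l₂' ++ [x]))) d < 0 := by
        rcases hRxy.1.lt_or_gt with hxy | hyx
        · -- x < y : compare the LB path [x,y] with the UB path P.reverse
          have hUB : IsUBWalk a x y P.reverse := isUBWalk_reverse hsym hP
          have hLB2 : IsLBWalk a x y [x, y] :=
            ⟨rfl, rfl, List.isChain_pair.mpr ⟨ne_of_lt hxy, fun h => absurd h (not_lt.mpr hxy.le)⟩⟩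
          have := hpc x y hxy P.reverse [x, y] hUB (by simpa using hPnd) hLB2
            (by simp [hRxy.1])
          rw [betaMWalk_eq_wsum, betaPWalk_eq_wsum,
            wsum_reverse (betaM k a) (betaP k a) (betaP_swap hsym) P,
            wsum_cons₂, wsum_single, dotProd_neg] at this
          have h0 : dotProd k (betaM k a x y + 0) d = dotProd k (betaM k a x y) d := by
            rw [dotProd_add, dotProd_zero, add_zero]
          rw [h0] at this
          have hPle' : dotProd k (wsum (betaM k a) (y :: (l₂' ++ [x]))) d
              ≤ dotProd k (wsum (betaM k a) P) d := by
            rw [← betaMWalk_eq_wsum, ← betaMWalk_eq_wsum]; exact hPle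
          linarith
        · -- y < x : compare the LB path P with the UB path [y,x]
          have hUB : IsUBWalk a y x [y, x] :=
            ⟨rfl, rfl, List.isChain_pair.mpr ⟨ne_of_lt hyx,
              fun _ => by rw [hsym]; exact hRxy.2 hyx⟩⟩
          have := hpc y x hyx [y, x] P hUB (by simp [Ne.symm hRxy.1]) hP hPnd
          rw [betaMWalk_eq_wsum, betaPWalk_eq_wsum, wsum_cons₂, wsum_single] at this
          have h0 : dotProd k (betaP k a y x + 0) d = - dotProd k (betaM k a x y) d := by
            rw [dotProd_add, dotProd_zero, add_zero, betaP_swap hsym, dotProd_neg]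
          rw [h0] at this
          have hPle' : dotProd k (wsum (betaM k a) (y :: (l₂' ++ [x]))) d
              ≤ dotProd k (wsum (betaM k a) P) d := by
            rw [← betaMWalk_eq_wsum, ← betaMWalk_eq_wsum]; exact hPle
          linarith
      -- the shortened walk
      have hlast' : (x :: l₃).getLast? = some v := by
        rw [show l₁ ++ x :: ((y :: l₂') ++ x :: l₃) = l₁ ++ ((x :: y :: l₂') ++ (x :: l₃)) by simp,
          List.getLast?_append_of_ne_nil _ (by simp),
          List.getLast?_append_of_ne_nil _ (by simp)] at hlast
        exact hlast
      have hw' : IsLBWalk a u v (l₁ ++ x :: l₃) := by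
        refine ⟨?_, ?_, hchain'⟩
        · rw [head?_append_cons l₁ x l₃ ((y :: l₂') ++ x :: l₃)]; exact hhead
        · rw [List.getLast?_append_of_ne_nil _ (by simp)]; exact hlast'
      have hlen' : (l₁ ++ x :: l₃).length ≤ N := by
        simp only [List.length_append, List.length_cons, List.length_nil] at hlen ⊢
        omega
      obtain ⟨P', hP', hP'nd, hle'⟩ := ih _ u v hlen' hw'
      refine ⟨P', hP', hP'nd, le_trans ?_ hle'⟩
      -- the walk splits as new walk + cycle
      have hsplit : wsum (betaM k a) (l₁ ++ x :: ((y :: l₂') ++ x :: l₃))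
          = wsum (betaM k a) (l₁ ++ x :: l₃)
            + (betaM k a x y + wsum (betaM k a) (y :: (l₂' ++ [x]))) := by
        rw [wsum_glue, wsum_glue (betaM k a) l₁ x l₃,
          show (x :: ((y :: l₂') ++ x :: l₃)) = (x :: y :: l₂') ++ x :: l₃ by simp,
          wsum_glue (betaM k a) (x :: y :: l₂') x l₃,
          show (x :: y :: l₂') ++ [x] = x :: y :: (l₂' ++ [x]) by simp,
          wsum_cons₂]
        abel
      rw [betaMWalk_eq_wsum, betaMWalk_eq_wsum, hsplit, dotProd_add, dotProd_add]
      linarith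

end Helpers3
/-- Lemma 4: given `d ∈ 𝔻ᵏ` satisfying the path condition for `A`, the map
`Π` defined recursively by `Π(1) = 0` and `Π(v) = (ub_v + lb_v)/2`, where
`ub_v = min_{i<v} (Π(i) + min{β⁺(W)ᵀd : W a (i,v)-upper-bound-path})` and
`lb_v = max_{i<v} (Π(i) + max{β⁻(W)ᵀd : W a (i,v)-lower-bound-path})`,
is strictly increasing. -/
theorem statement8 (n k : ℕ) (hn : 1 ≤ n) (hk : 1 ≤ k) (a : Fin n → Fin n → ℕ)
    (hA : IsRobinson n k a) (d : ℕ → ℝ) (hd : IsThreshold k d)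
    (hpc : PathCondition n k a d) (f ub lb : Fin n → ℝ)
    (hub : ∀ v : Fin n, 0 < v.val → IsLeast
      {x : ℝ | ∃ i : Fin n, i < v ∧ ∃ w : List (Fin n),
        IsUBWalk a i v w ∧ w.Nodup ∧ x = f i + dotProd k (betaPWalk k a w) d} (ub v))
    (hlb : ∀ v : Fin n, 0 < v.val → IsGreatest
      {x : ℝ | ∃ i : Fin n, i < v ∧ ∃ w : List (Fin n),
        IsLBWalk a i v w ∧ w.Nodup ∧ x = f i + dotProd k (betaMWalk k a w) d} (lb v))
    (hf0 : f ⟨0, hn⟩ = 0)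
    (hfv : ∀ v : Fin n, 0 < v.val → f v = (ub v + lb v) / 2) :
    StrictMono f := by
  obtain ⟨hsym, hdiag, hlek, hrob⟩ := hA
  have key : ∀ m : ℕ, ∀ v : Fin n, v.val ≤ m → 0 < v.val → lb v < ub v := by
    intro m
    induction m with
    | zero => intro v h h0; omega
    | succ m ihm =>
      intro v hvm hv0
      obtain ⟨⟨i, hiv, w₁, hw₁, hw₁nd, hubeq⟩, hubd⟩ := hub v hv0
      obtain ⟨⟨j, hjv, w₂, hw₂, hw₂nd, hlbeq⟩, hlbd⟩ := hlb v hv0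
      rcases eq_or_ne i j with rfl | hij
      · have := hpc i v hiv w₁ w₂ hw₁ hw₁nd hw₂ hw₂nd
        rw [hubeq, hlbeq]; linarith
      · -- decompose w₂ = l ++ [v]
        obtain ⟨l, rfl⟩ := List.getLast?_eq_some_iff.mp hw₂.2.1
        -- w₁.reverse = v :: t
        have hrev : IsLBWalk a v i w₁.reverse := isLBWalk_reverse hsym hw₁
        obtain ⟨t, ht⟩ : ∃ t, w₁.reverse = v :: t := by
          cases hr : w₁.reverse with
          | nil => rw [hr] at hrev; exact absurd hrev.1 (by simp)
          | cons z t =>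
            rw [hr] at hrev
            have hz : z = v := by simpa using hrev.1
            exact ⟨t, by rw [hz]⟩
        -- the combined LB walk from j to i
        have hWchain : List.Chain' (fun x y => x ≠ y ∧ (y < x → 1 ≤ a x y)) (l ++ v :: t) := by
          have h2 := hw₂.2.2
          unfold List.Chain' at h2
          rw [List.isChain_append] at h2
          have h3 := hrev.2.2
          rw [ht] at h3
          unfold List.Chain' at *
          rw [List.isChain_append]
          exact ⟨h2.1, h3, fun p hp q hq => h2.2.2 p hp q (by simpa using hq)⟩
        have hW : IsLBWalk a j i (l ++ v :: t) := by
          refine ⟨?_, ?_, hWchain⟩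
          · rw [head?_append_cons l v t []]; exact hw₂.1
          · rw [List.getLast?_append_of_ne_nil _ (by simp), ← ht]
            exact hrev.2.1
        obtain ⟨P, hP, hPnd, hPle⟩ := pathRed hsym hpc _ _ j i le_rfl hW
        -- value of the combined walk
        have hval : dotProd k (betaMWalk k a (l ++ v :: t)) d
            = dotProd k (betaMWalk k a (l ++ [v])) d - dotProd k (betaPWalk k a w₁) d := by
          rw [betaMWalk_eq_wsum, betaMWalk_eq_wsum, betaPWalk_eq_wsum, wsum_glue,
            dotProd_add]
          have : wsum (betaM k a) (v :: t) = - wsum (betaP k a) w₁ := by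
            rw [← ht]; exact wsum_reverse (betaP k a) (betaM k a) (betaM_swap hsym) w₁
          rw [this, dotProd_neg]; ring
        rcases hij.lt_or_gt with hlt | hlt
        · -- i < j : use ub j
          have hj0 : 0 < j.val := by
            have h1 : i.val < j.val := hlt
            omega
          have hjm : j.val ≤ m := by
            have h1 : j.val < v.val := hjv
            omega
          have hPrev : IsUBWalk a i j P.reverse := isUBWalk_reverse hsym hP
          have hmem : f i + dotProd k (betaPWalk k a P.reverse) d ∈
              {x : ℝ | ∃ i' : Fin n, i' < j ∧ ∃ w : List (Fin n),
                IsUBWalk a i' j w ∧ w.Nodup ∧ x = f i' + dotProd k (betaPWalk k a w) d} :=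
            ⟨i, hlt, P.reverse, hPrev, by simpa using hPnd, rfl⟩
          have hub_le := (hub j hj0).2 hmem
          have hfj : f j = (ub j + lb j) / 2 := hfv j hj0
          have hlbub_j := ihm j hjm hj0
          have hrevval : dotProd k (betaPWalk k a P.reverse) d
              = - dotProd k (betaMWalk k a P) d := by
            rw [betaPWalk_eq_wsum, betaMWalk_eq_wsum,
              wsum_reverse (betaM k a) (betaP k a) (betaP_swap hsym) P, dotProd_neg]
          rw [hubeq, hlbeq]
          rw [hrevval] at hub_le
          linarith
        · -- j < i : use lb i
          have hi0 : 0 < i.val := by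
            have h1 : j.val < i.val := hlt
            omega
          have him : i.val ≤ m := by
            have h1 : i.val < v.val := hiv
            omega
          have hmem : f j + dotProd k (betaMWalk k a P) d ∈
              {x : ℝ | ∃ i' : Fin n, i' < i ∧ ∃ w : List (Fin n),
                IsLBWalk a i' i w ∧ w.Nodup ∧ x = f i' + dotProd k (betaMWalk k a w) d} :=
            ⟨j, hlt, P, hP, hPnd, rfl⟩
          have hlb_ge := (hlb i hi0).2 hmem
          have hfi : f i = (ub i + lb i) / 2 := hfv i hi0
          have hlbub_i := ihm i him hi0
          rw [hubeq, hlbeq]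
          linarith
  intro u v huv
  have huvval : u.val < v.val := huv
  have hv0 : 0 < v.val := by omega
  have hlbub := key v.val v le_rfl hv0
  have hfveq := hfv v hv0
  have hwalk : IsLBWalk a u v [u, v] :=
    ⟨rfl, rfl, List.isChain_pair.mpr ⟨ne_of_lt huv, fun h => absurd h (not_lt.mpr huv.le)⟩⟩
  have hmem : f u + dotProd k (betaMWalk k a [u, v]) d ∈
      {x : ℝ | ∃ i : Fin n, i < v ∧ ∃ w : List (Fin n),
        IsLBWalk a i v w ∧ w.Nodup ∧ x = f i + dotProd k (betaMWalk k a w) d} :=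
    ⟨u, huv, [u, v], hwalk, by simp [ne_of_lt huv], rfl⟩
  have h1 := (hlb v hv0).2 hmem
  have h2 : 0 ≤ dotProd k (betaMWalk k a [u, v]) d := by
    have heq : betaMWalk k a [u, v] = betaM k a u v + 0 := by
      rw [betaMWalk_eq_wsum, wsum_cons₂, wsum_single]
    rw [heq, dotProd_add, dotProd_zero, add_zero]
    unfold betaM
    rw [if_pos huv]
    split
    · rw [dotProd_zero]
    · rename_i hne
      rw [dotProd_chi _ (by omega) (by have := hlek u v; omega)]
      exact le_of_lt (d_pos hd _ (by omega) (by have := hlek u v; omega))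
  linarith
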